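/- A homogeneous element B ∈ L_∞ satisfies ‖B‖ = ‖φBφ‖ for every φ ∈ F_0, where F_0 is the localizing class at the cone vertex. -/

import Mathlib

open Filter Topology ZeroAtInfty

section Cone

variable {K : Type*} [TopologicalSpace K] [LocallyCompactSpace K] [T2Space K]
variable {H : Type*} [NormedAddCommGroup H] [InnerProductSpace ℂ H] [CompleteSpace H]

/-- The axioms of a cone: a distinguished vertex together with a multiplicative
dilation group `g_λ` (`λ > 0`) fixing the vertex, such that every compact set is moved
into any given neighborhood of the vertex by all sufficiently small dilations. -/
structure ConeStruct (K : Type*) [TopologicalSpace K] where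
  vertex : K
  g : ℝ → K → K
  g_cont : ∀ l : ℝ, 0 < l → Continuous (g l)
  g_one : g 1 = id
  g_mul : ∀ l m : ℝ, 0 < l → 0 < m → ∀ z, g (l * m) z = g l (g m z)
  g_vertex : ∀ l : ℝ, 0 < l → g l vertex = vertex
  g_shrink : ∀ Q : Set K, IsCompact Q → ∀ V ∈ 𝓝 vertex,
    ∃ ε > (0:ℝ), ∀ l : ℝ, 0 < l → l < ε → g l '' Q ⊆ V

/-- The localizing class `F₀` at the vertex of the cone: compactly supported continuous
functions with values in `[0,1]` equal to `1` in a neighborhood of the vertex. -/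
def coneLocClass (c : ConeStruct K) : Set C₀(K, ℂ) :=
  {φ | HasCompactSupport ⇑φ ∧ (∀ z, (φ z).re ∈ Set.Icc (0:ℝ) 1 ∧ (φ z).im = 0) ∧
    ∃ V ∈ 𝓝 c.vertex, ∀ z ∈ V, φ z = 1}

variable (π : C₀(K, ℂ) →⋆ₙₐ[ℂ] (H →L[ℂ] H))

/-- A strongly continuous one-parameter unitary group `U_λ` (`λ > 0`). -/
def IsUnitaryDilGroup (U : ℝ → H →L[ℂ] H) : Prop :=
  U 1 = 1 ∧ (∀ l m : ℝ, 0 < l → 0 < m → U (l * m) = U l ∘L U m) ∧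
    (∀ l : ℝ, 0 < l → ∀ v, ‖U l v‖ = ‖v‖) ∧
    ∀ v : H, ContinuousOn (fun l => U l v) (Set.Ioi (0:ℝ))

/-- Compatibility of the unitary group with the module structure:
`U_λ φ U_λ⁻¹ = φ ∘ g_λ`, stated as `π(φ ∘ g_λ) U_λ = U_λ π(φ)`. -/
def DilCompatible (c : ConeStruct K) (U : ℝ → H →L[ℂ] H) : Prop :=
  ∀ l : ℝ, 0 < l → ∀ φ ψ : C₀(K, ℂ), (∀ z, ψ z = φ (c.g l z)) →
    (π ψ) ∘L (U l) = (U l) ∘L (π φ)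

/-- The localization condition at the vertex: the localizing class `F₀`, directed by
`φ ≺ ψ ↔ φψ = ψ`, converges strongly to `0`. -/
def VertexLocConv (c : ConeStruct K) : Prop :=
  ∀ (v : H) (ε : ℝ), 0 < ε →
    ∃ φ ∈ coneLocClass c, ∀ ψ ∈ coneLocClass c, φ * ψ = ψ → ‖π ψ v‖ < ε

/-- Nondegeneracy: the strong closure of the image of `C₀(K)` contains the identity. -/
def NondegenerateModule : Prop :=
  ∀ (v : H) (ε : ℝ), 0 < ε → ∃ φ : C₀(K, ℂ), ‖π φ v - v‖ < ε

end Cone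

section Families

variable {K : Type*} [TopologicalSpace K] [LocallyCompactSpace K] [T2Space K]
variable {H : Type*} [NormedAddCommGroup H] [InnerProductSpace ℂ H] [CompleteSpace H]
variable {Y : Type*} [TopologicalSpace Y]

/-- Membership in the ideal `J = C₀(Y, K(H))`: compact-valued families tending to zero
in norm at infinity. -/
def MemJIdeal (D : Y → H →L[ℂ] H) : Prop :=
  (∀ y, IsCompactOperator ⇑(D y)) ∧ Tendsto (fun y => ‖D y‖) (cocompact Y) (𝓝 0)

variable (π : C₀(K, ℂ) →⋆ₙₐ[ℂ] (H →L[ℂ] H))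

/-- Membership in the algebra `L` of bounded continuous families commuting with the
`C₀(K)`-action modulo the ideal `J`. -/
def MemLAlg (B : Y → H →L[ℂ] H) : Prop :=
  Continuous B ∧ (∃ M, ∀ y, ‖B y‖ ≤ M) ∧
    ∀ φ : C₀(K, ℂ), MemJIdeal (fun y => B y ∘L π φ - π φ ∘L B y)

/-- Membership in the ideal `J₀ ⊂ L` of almost compact families:
`Bφ ∈ J` for every `φ ∈ C₀(K)`. -/
def MemAlmostCompact (B : Y → H →L[ℂ] H) : Prop :=
  ∀ φ : C₀(K, ℂ), MemJIdeal (fun y => B y ∘L π φ)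

/-- Homogeneity of a family: `U_λ⁻¹ B(λy) U_λ = B(y)`. -/
def IsHomogeneousFamily (U : ℝ → H →L[ℂ] H) (act : ℝ → Y → Y)
    (B : Y → H →L[ℂ] H) : Prop :=
  ∀ l : ℝ, 0 < l → ∀ y, (U l⁻¹) ∘L B (act l y) ∘L (U l) = B y

end Families


section AuxLemmas

variable {K : Type*} [TopologicalSpace K] [LocallyCompactSpace K] [T2Space K]
variable {H : Type*} [NormedAddCommGroup H] [InnerProductSpace ℂ H] [CompleteSpace H]

lemma c0_norm_le' {f : C₀(K, ℂ)} {C : ℝ} (hC : 0 ≤ C) (h : ∀ z, ‖f z‖ ≤ C) : ‖f‖ ≤ C := by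
  rw [← ZeroAtInftyContinuousMap.norm_toBCF_eq_norm]
  exact (BoundedContinuousFunction.norm_le hC).mpr h

/-- Approximation of the identity by operators of compactly supported functions. -/
lemma approx_compact_support (π : C₀(K, ℂ) →⋆ₙₐ[ℂ] (H →L[ℂ] H))
    (hnd : NondegenerateModule π) (v : H) {δ : ℝ} (hδ : 0 < δ) :
    ∃ ψ : C₀(K, ℂ), HasCompactSupport ⇑ψ ∧ ‖π ψ v - v‖ < δ := by
  obtain ⟨σ, hσ⟩ := hnd v (δ / 2) (by positivity)
  set δ' : ℝ := δ / (2 * (‖v‖ + 1)) with hδ'def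
  have hδ'0 : 0 < δ' := by positivity
  have hev : ∀ᶠ z in cocompact K, ‖σ z‖ < δ' := by
    have := Metric.tendsto_nhds.mp (zero_at_infty σ) δ' hδ'0
    simpa [dist_zero_right] using this
  obtain ⟨Q, hQc, hQ⟩ := Filter.mem_cocompact.mp hev
  obtain ⟨u, hu1, -, hucs, hu01⟩ :=
    exists_continuous_one_zero_of_isCompact hQc isClosed_empty (Set.disjoint_empty _)
  have hucs' : HasCompactSupport (fun z => ((u z : ℝ) : ℂ)) := by
    have := hucs.comp_left (g := fun r : ℝ => (r : ℂ)) (by simp)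
    exact this
  let uC : C₀(K, ℂ) :=
    ⟨⟨fun z => ((u z : ℝ) : ℂ), by fun_prop⟩, hucs'.is_zero_at_infty⟩
  refine ⟨uC * σ, ?_, ?_⟩
  · have : HasCompactSupport (⇑uC * ⇑σ) := hucs'.mul_right
    simpa [ZeroAtInftyContinuousMap.coe_mul] using this
  · have hdiff : ‖uC * σ - σ‖ ≤ δ' := by
      apply c0_norm_le' hδ'0.le
      intro z
      have hz : (uC * σ - σ) z = ((u z : ℂ) - 1) * σ z := by
        simp [uC, sub_mul]
      rw [hz]
      by_cases hzQ : z ∈ Q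
      · have : u z = 1 := hu1 hzQ
        simp [this, hδ'0.le]
      · have h1 : ‖σ z‖ ≤ δ' := le_of_lt (hQ (by simpa using hzQ))
        have h2 : ‖(u z : ℂ) - 1‖ ≤ 1 := by
          obtain ⟨ha, hb⟩ := hu01 z
          rw [show ((u z : ℝ) : ℂ) - 1 = (((u z : ℝ) - 1 : ℝ) : ℂ) by push_cast; ring]
          rw [Complex.norm_real]
          rw [Real.norm_eq_abs, abs_le]
          constructor <;> linarith
        calc ‖((u z : ℂ) - 1) * σ z‖ = ‖(u z : ℂ) - 1‖ * ‖σ z‖ := norm_mul _ _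
          _ ≤ 1 * δ' := mul_le_mul h2 h1 (norm_nonneg _) zero_le_one
          _ = δ' := one_mul _
    have h3 : ‖π (uC * σ) v - π σ v‖ ≤ δ' * ‖v‖ := by
      rw [← ContinuousLinearMap.sub_apply, ← map_sub]
      calc ‖π (uC * σ - σ) v‖ ≤ ‖π (uC * σ - σ)‖ * ‖v‖ := (π _).le_opNorm v
        _ ≤ δ' * ‖v‖ := by
            apply mul_le_mul_of_nonneg_right _ (norm_nonneg v)
            exact (NonUnitalStarAlgHom.norm_apply_le π _).trans hdiff
    have h4 : δ' * ‖v‖ < δ / 2 := by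
      rw [hδ'def]
      rw [div_mul_eq_mul_div, div_lt_iff₀ (by positivity)]
      nlinarith [norm_nonneg v]
    calc ‖π (uC * σ) v - v‖ ≤ ‖π (uC * σ) v - π σ v‖ + ‖π σ v - v‖ :=
          norm_sub_le_norm_sub_add_norm_sub _ _ _
      _ < δ / 2 + δ / 2 := add_lt_add (h3.trans_lt h4) hσ
      _ = δ := by ring

/-- Composition of a compactly supported `C₀` function with a dilation. -/
lemma comp_dilation_c0 (c : ConeStruct K) {l : ℝ} (hl : 0 < l)
    (ψ : C₀(K, ℂ)) (hψ : HasCompactSupport ⇑ψ) :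
    ∃ χ : C₀(K, ℂ), ∀ z, χ z = ψ (c.g l z) := by
  have hlinv : 0 < l⁻¹ := inv_pos.mpr hl
  have hgg : ∀ z, c.g l⁻¹ (c.g l z) = z := by
    intro z
    rw [← c.g_mul l⁻¹ l hlinv hl, inv_mul_cancel₀ hl.ne', c.g_one]; rfl
  have hcs : HasCompactSupport (fun z => ψ (c.g l z)) := by
    apply HasCompactSupport.intro (hψ.image (c.g_cont l⁻¹ hlinv))
    intro z hz
    by_contra h
    exact hz ⟨c.g l z, subset_tsupport _ h, hgg z⟩
  exact ⟨⟨⟨fun z => ψ (c.g l z), (map_continuous ψ).comp (c.g_cont l hl)⟩,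
    hcs.is_zero_at_infty⟩, fun z => rfl⟩

end AuxLemmas

/-- A homogeneous element `B ∈ L_∞` satisfies `‖B‖ = ‖φBφ‖` for every
function `φ` of the localizing class `F₀` at the cone vertex, where the norm is the
supremum over the parameter `y`. -/
theorem homogeneous_norm_eq_localized_norm
    {K : Type*} [TopologicalSpace K] [LocallyCompactSpace K] [T2Space K]
    {H : Type*} [NormedAddCommGroup H] [InnerProductSpace ℂ H] [CompleteSpace H]
    {Y : Type*} [TopologicalSpace Y]
    (c : ConeStruct K) (π : C₀(K, ℂ) →⋆ₙₐ[ℂ] (H →L[ℂ] H))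
    (hnd : NondegenerateModule π) (hloc : VertexLocConv π c)
    (U : ℝ → H →L[ℂ] H) (hU : IsUnitaryDilGroup U) (hcomp : DilCompatible π c U)
    (act : ℝ → Y → Y) (hact_cont : ∀ l : ℝ, 0 < l → Continuous (act l))
    (hact_one : act 1 = id)
    (hact_mul : ∀ l m : ℝ, 0 < l → 0 < m → ∀ y, act (l * m) y = act l (act m y))
    (B : Y → H →L[ℂ] H) (hB : MemLAlg π B)
    (hhom : IsHomogeneousFamily U act B) :
    ∀ φ ∈ coneLocClass c,
      (⨆ y : Y, ‖B y‖) = ⨆ y : Y, ‖(π φ) ∘L B y ∘L (π φ)‖ := by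
  intro φ hφ
  obtain ⟨hφcs, hφval, V, hV, hφ1⟩ := hφ
  obtain ⟨hU1, hUmul, hUnorm, -⟩ := hU
  obtain ⟨-, ⟨M₀, hM₀⟩, -⟩ := hB
  set M : ℝ := max M₀ 0 with hMdef
  have hM0 : 0 ≤ M := le_max_right _ _
  have hMb : ∀ y, ‖B y‖ ≤ M := fun y => (hM₀ y).trans (le_max_left _ _)
  have hπle : ∀ f : C₀(K, ℂ), ‖π f‖ ≤ ‖f‖ := fun f => NonUnitalStarAlgHom.norm_apply_le π f
  have hφzle : ∀ z, ‖φ z‖ ≤ 1 := by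
    intro z
    obtain ⟨⟨h0, h1⟩, him⟩ := hφval z
    have : φ z = (((φ z).re : ℝ) : ℂ) := Complex.ext rfl (by simp [him])
    rw [this, Complex.norm_real, Real.norm_eq_abs, abs_le]
    exact ⟨by linarith, h1⟩
  have hφle : ‖π φ‖ ≤ 1 := (hπle φ).trans (c0_norm_le' zero_le_one hφzle)
  have hkey_easy : ∀ y, ‖π φ ∘L B y ∘L π φ‖ ≤ ‖B y‖ := by
    intro y
    calc ‖π φ ∘L B y ∘L π φ‖ ≤ ‖π φ‖ * ‖B y ∘L π φ‖ := ContinuousLinearMap.opNorm_comp_le _ _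
      _ ≤ ‖π φ‖ * (‖B y‖ * ‖π φ‖) :=
          mul_le_mul_of_nonneg_left (ContinuousLinearMap.opNorm_comp_le _ _) (norm_nonneg _)
      _ ≤ 1 * (‖B y‖ * 1) := by
          apply mul_le_mul hφle _ (by positivity) zero_le_one
          exact mul_le_mul_of_nonneg_left hφle (norm_nonneg _)
      _ = ‖B y‖ := by ring
  have hbdd1 : BddAbove (Set.range fun y => ‖B y‖) := by
    refine ⟨M, ?_⟩; rintro - ⟨y, rfl⟩; exact hMb y
  have hbdd2 : BddAbove (Set.range fun y => ‖π φ ∘L B y ∘L π φ‖) := by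
    refine ⟨M, ?_⟩; rintro - ⟨y, rfl⟩; exact (hkey_easy y).trans (hMb y)
  rcases isEmpty_or_nonempty Y with hY | hY
  · rw [iSup_of_empty' (fun y : Y => ‖B y‖), iSup_of_empty' (fun y : Y => ‖π φ ∘L B y ∘L π φ‖)]
  set S : ℝ := ⨆ y, ‖π φ ∘L B y ∘L π φ‖ with hSdef
  have hSy : ∀ y, ‖π φ ∘L B y ∘L π φ‖ ≤ S := fun y => le_ciSup hbdd2 y
  have hS0 : 0 ≤ S := le_trans (norm_nonneg _) (hSy hY.some)
  refine le_antisymm (ciSup_le fun y => ?_) (ciSup_le fun y => (hkey_easy y).trans (le_ciSup hbdd1 y))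
  -- the hard inequality : ‖B y‖ ≤ S
  refine le_of_forall_pos_le_add fun ε hε => ?_
  set δ : ℝ := ε / (M + S + 3) with hδdef
  have hδ : 0 < δ := by positivity
  have hδε : δ * (M + S + 3) = ε := by
    rw [hδdef]; field_simp
  -- main estimate for unit vectors
  have key : ∀ v : H, ‖v‖ ≤ 1 → ‖B y v‖ ≤ S + ε := by
    intro v hv
    obtain ⟨ψ₁, hψ₁cs, hψ₁v⟩ := approx_compact_support π hnd v hδ
    set w₀ : H := B y (π ψ₁ v) - π ψ₁ (B y v) with hw₀def
    obtain ⟨ψ₂, hψ₂cs, hψ₂w⟩ := approx_compact_support π hnd w₀ hδ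
    obtain ⟨ε₀, hε₀, hshr⟩ :=
      c.g_shrink (tsupport ⇑ψ₁ ∪ tsupport ⇑ψ₂) (hψ₁cs.union hψ₂cs) V hV
    set l : ℝ := max 1 (2 / ε₀) with hldef
    have hl : 0 < l := lt_of_lt_of_le one_pos (le_max_left _ _)
    have hlinv : 0 < l⁻¹ := inv_pos.mpr hl
    have hlε : l⁻¹ < ε₀ := by
      have h2 : 2 / ε₀ ≤ l := le_max_right _ _
      have h3 : l⁻¹ ≤ (2 / ε₀)⁻¹ := inv_anti₀ (by positivity) h2
      rw [inv_div] at h3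
      linarith
    have hsub : ∀ q ∈ tsupport ⇑ψ₁ ∪ tsupport ⇑ψ₂, c.g l⁻¹ q ∈ V :=
      fun q hq => hshr l⁻¹ hlinv hlε ⟨q, hq, rfl⟩
    have hgg : ∀ z, c.g l⁻¹ (c.g l z) = z := by
      intro z; rw [← c.g_mul l⁻¹ l hlinv hl, inv_mul_cancel₀ hl.ne', c.g_one]; rfl
    have hgg' : ∀ z, c.g l (c.g l⁻¹ z) = z := by
      intro z; rw [← c.g_mul l l⁻¹ hl hlinv, mul_inv_cancel₀ hl.ne', c.g_one]; rfl
    obtain ⟨χ, hχ⟩ := comp_dilation_c0 c hl ψ₁ hψ₁cs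
    obtain ⟨φ', hφ'⟩ := comp_dilation_c0 c hlinv φ hφcs
    -- unitary identities
    have hUcan : ∀ x : H, U l⁻¹ (U l x) = x := by
      intro x
      have h := hUmul l⁻¹ l hlinv hl
      rw [inv_mul_cancel₀ hl.ne', hU1] at h
      have := congrArg (fun T : H →L[ℂ] H => T x) h
      simpa using this.symm
    have hUcan' : ∀ x : H, U l (U l⁻¹ x) = x := by
      intro x
      have h := hUmul l l⁻¹ hl hlinv
      rw [mul_inv_cancel₀ hl.ne', hU1] at h
      have := congrArg (fun T : H →L[ℂ] H => T x) h
      simpa using this.symm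
    have hUn : ∀ x : H, ‖U l x‖ = ‖x‖ := hUnorm l hl
    have hUn' : ∀ x : H, ‖U l⁻¹ x‖ = ‖x‖ := hUnorm l⁻¹ hlinv
    -- compatibility identities
    have hχU : ∀ x : H, π χ (U l x) = U l (π ψ₁ x) := by
      intro x
      have h := hcomp l hl ψ₁ χ hχ
      have := congrArg (fun T : H →L[ℂ] H => T x) h
      simpa using this
    have hφU : ∀ x : H, π φ (U l x) = U l (π φ' x) := by
      intro x
      have h := hcomp l hl φ' φ (fun z => by rw [hφ' (c.g l z), hgg z])
      have := congrArg (fun T : H →L[ℂ] H => T x) h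
      simpa using this
    -- homogeneity identities
    set z := act l y with hzdef
    have hBU : ∀ x : H, B y x = U l⁻¹ (B z (U l x)) := by
      intro x
      have h := hhom l hl y
      have := congrArg (fun T : H →L[ℂ] H => T x) h
      simpa using this.symm
    have hBU' : ∀ x : H, B z (U l x) = U l (B y x) := by
      intro x
      rw [hBU x, hUcan']
    -- multiplicative identities
    have hφχmul : φ * χ = χ := by
      ext q
      rw [ZeroAtInftyContinuousMap.coe_mul, Pi.mul_apply]
      by_cases hq : χ q = 0
      · simp [hq]
      · have hmem : c.g l q ∈ tsupport ⇑ψ₁ := by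
          apply subset_tsupport
          rw [Function.mem_support]
          intro h0
          exact hq (by rw [hχ q, h0])
        have hqV : q ∈ V := by
          have := hsub (c.g l q) (Or.inl hmem)
          rwa [hgg q] at this
        simp [hφ1 q hqV]
    have hφχ : ∀ x : H, π φ (π χ x) = π χ x := by
      intro x
      conv_rhs => rw [← hφχmul, map_mul]
      rfl
    have hφ'ψ₂mul : φ' * ψ₂ = ψ₂ := by
      ext q
      rw [ZeroAtInftyContinuousMap.coe_mul, Pi.mul_apply]
      by_cases hq : ψ₂ q = 0
      · simp [hq]
      · have hmem : q ∈ tsupport ⇑ψ₂ := subset_tsupport _ (Function.mem_support.mpr hq)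
        have hqV : c.g l⁻¹ q ∈ V := hsub q (Or.inr hmem)
        rw [hφ' q, hφ1 _ hqV]
        simp
    have hφ'ψ₂ : ∀ x : H, π φ' (π ψ₂ x) = π ψ₂ x := by
      intro x
      conv_rhs => rw [← hφ'ψ₂mul, map_mul]
      rfl
    -- norms of auxiliary vectors
    have hψ₁v' : ‖π ψ₁ v‖ ≤ 1 + δ := by
      calc ‖π ψ₁ v‖ ≤ ‖π ψ₁ v - v‖ + ‖v‖ := by
            simpa using norm_add_le (π ψ₁ v - v) v
        _ ≤ δ + 1 := add_le_add hψ₁v.le hv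
        _ = 1 + δ := by ring
    set X : H := B z (π χ (U l v)) with hXdef
    -- term 1
    have hT1 : ‖π φ X‖ ≤ S * (1 + δ) := by
      have e1 : π φ X = (π φ ∘L B z ∘L π φ) (π χ (U l v)) := by
        simp only [ContinuousLinearMap.comp_apply, hφχ, hXdef]
      rw [e1]
      calc ‖(π φ ∘L B z ∘L π φ) (π χ (U l v))‖
          ≤ ‖π φ ∘L B z ∘L π φ‖ * ‖π χ (U l v)‖ := (ContinuousLinearMap.le_opNorm _ _)
        _ ≤ S * (1 + δ) := by
            apply mul_le_mul (hSy z) _ (norm_nonneg _) hS0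
            rw [hχU v, hUn]
            exact hψ₁v'
    -- term 2
    have hT2 : ‖X - π φ X‖ ≤ 2 * δ := by
      have e2 : X - π χ (B z (U l v)) = U l w₀ := by
        rw [hXdef, hχU v, hBU' (π ψ₁ v), hBU' v, hχU (B y v), hw₀def, map_sub]
      have e3 : π φ (π χ (B z (U l v))) = π χ (B z (U l v)) := hφχ _
      have e4 : X - π φ X = U l w₀ - π φ (U l w₀) := by
        have h5 : X = U l w₀ + π χ (B z (U l v)) := by rw [← e2]; abel
        rw [h5, map_add, e3]; abel
      have hφ'le : ‖π φ'‖ ≤ 1 := by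
        apply (hπle φ').trans
        apply c0_norm_le' zero_le_one
        intro q
        rw [hφ' q]
        exact hφzle _
      rw [e4, hφU w₀, ← map_sub, hUn]
      have d1 : ‖w₀ - π ψ₂ w₀‖ ≤ δ := by rw [norm_sub_rev]; exact hψ₂w.le
      have e6 : w₀ - π φ' w₀ = (w₀ - π ψ₂ w₀) + π φ' (π ψ₂ w₀ - w₀) := by
        rw [map_sub (π φ') (π ψ₂ w₀) w₀, hφ'ψ₂ w₀]; abel
      rw [e6]
      calc ‖(w₀ - π ψ₂ w₀) + π φ' (π ψ₂ w₀ - w₀)‖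
          ≤ ‖w₀ - π ψ₂ w₀‖ + ‖π φ' (π ψ₂ w₀ - w₀)‖ := norm_add_le _ _
        _ ≤ δ + 1 * δ := by
            apply add_le_add d1
            calc ‖π φ' (π ψ₂ w₀ - w₀)‖ ≤ ‖π φ'‖ * ‖π ψ₂ w₀ - w₀‖ :=
                  ContinuousLinearMap.le_opNorm _ _
              _ ≤ 1 * δ := mul_le_mul hφ'le hψ₂w.le (norm_nonneg _) zero_le_one
        _ = 2 * δ := by ring
    have hmain : ‖B y (π ψ₁ v)‖ ≤ S * (1 + δ) + 2 * δ := by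
      rw [hBU (π ψ₁ v), hUn', ← hχU v, ← hXdef]
      have h7 : X = π φ X + (X - π φ X) := by abel
      calc ‖X‖ ≤ ‖π φ X‖ + ‖X - π φ X‖ := by
            conv_lhs => rw [h7]
            exact norm_add_le _ _
        _ ≤ S * (1 + δ) + 2 * δ := add_le_add hT1 hT2
    have t1 : ‖B y v - B y (π ψ₁ v)‖ ≤ M * δ := by
      rw [← map_sub]
      calc ‖B y (v - π ψ₁ v)‖ ≤ ‖B y‖ * ‖v - π ψ₁ v‖ := ContinuousLinearMap.le_opNorm _ _
        _ ≤ M * δ := mul_le_mul (hMb y) (by rw [norm_sub_rev]; exact hψ₁v.le)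
            (norm_nonneg _) hM0
    calc ‖B y v‖ ≤ ‖B y v - B y (π ψ₁ v)‖ + ‖B y (π ψ₁ v)‖ := by
          simpa using norm_add_le (B y v - B y (π ψ₁ v)) (B y (π ψ₁ v))
      _ ≤ M * δ + (S * (1 + δ) + 2 * δ) := add_le_add t1 hmain
      _ ≤ S + ε := by nlinarith [hδ.le]
  -- conclude operator norm bound
  refine ContinuousLinearMap.opNorm_le_bound _ (by positivity) fun v => ?_
  rcases eq_or_ne v 0 with rfl | hv0
  · simp
  · have hvpos : 0 < ‖v‖ := norm_pos_iff.mpr hv0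
    have hunit : ‖((‖v‖ : ℂ))⁻¹ • v‖ ≤ 1 := by
      rw [norm_smul, norm_inv, Complex.norm_real, Real.norm_eq_abs, abs_of_pos hvpos,
        inv_mul_cancel₀ hvpos.ne']
    have h := key (((‖v‖ : ℂ))⁻¹ • v) hunit
    rw [(B y).map_smul, norm_smul, norm_inv, Complex.norm_real, Real.norm_eq_abs,
      abs_of_pos hvpos] at h
    have h2 : ‖v‖ * (‖v‖⁻¹ * ‖(B y) v‖) ≤ ‖v‖ * (S + ε) :=
      mul_le_mul_of_nonneg_left h hvpos.le
    rw [← mul_assoc, mul_inv_cancel₀ hvpos.ne', one_mul, mul_comm] at h2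
    exact h2
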